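/- Let B be an unbounded ballean on a set X with radii set P. If the hyperballean B^♭ is of bounded geometry (there exist α ∈ P and f : P → ℕ such that for every β ∈ P, every H ∈ X^♭, and every α-discrete subset S of B^♭(H,β), one has |S| ≤ f(β)), then there exists a large subset Y ⊆ X such that the subballean B_Y coincides with F_Y, i.e.: for every γ ∈ P there is a finite F ⊆ Y with B(y,γ) ∩ Y = {y} for every y ∈ Y∖F and B(y,γ) ∩ Y ⊆ F for every y ∈ F, and for every finite F ⊆ Y there is γ ∈ P with F ⊆ B(y,γ) for every y ∈ F. -/

import Mathlib

/-- The ball of radius `α` around a subset `A`: `B(A,α) = ⋃_{a ∈ A} B(a,α)`. -/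
def setBall {X P : Type*} (B : X → P → Set X) (A : Set X) (α : P) : Set X :=
  ⋃ a ∈ A, B a α

/-- A subset `Y` is bounded if `Y ⊆ B(x,α)` for some `x` and `α`. -/
def IsBddSet {X P : Type*} (B : X → P → Set X) (Y : Set X) : Prop :=
  ∃ (x : X) (α : P), Y ⊆ B x α

/-- The ball `B^♭(H,α)` of the hyperballean `B^♭`: all nonempty bounded `Z`
with `Z ⊆ B(H,α)` and `H ⊆ B(Z,α)`. -/
def hyperBall {X P : Type*} (B : X → P → Set X) (H : Set X) (α : P) : Set (Set X) :=
  {Z | Z.Nonempty ∧ IsBddSet B Z ∧ Z ⊆ setBall B H α ∧ H ⊆ setBall B Z α}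

/-- Theorem 1(ii), necessity: if `B` is an unbounded ballean on `X` whose
hyperballean `B^♭` is of bounded geometry, then there exists a large subset
`Y ⊆ X` such that `B_Y = F_Y`. -/
theorem hyperballean_bounded_geometry_implies_sub_FY
    {X P : Type*} [Nonempty P] (B : X → P → Set X)
    (hmem : ∀ (x : X) (α : P), x ∈ B x α)
    (hsymm : ∀ (x y : X) (α : P), y ∈ B x α ↔ x ∈ B y α)
    (hcomp : ∀ α β : P, ∃ γ : P, ∀ x : X, ∀ y ∈ B x α, B y β ⊆ B x γ)
    (hconn : ∀ x y : X, ∃ α : P, y ∈ B x α)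
    (hunb : ¬ IsBddSet B Set.univ)
    (hbg : ∃ (α : P) (f : P → ℕ), ∀ (β : P) (H : Set X), H.Nonempty → IsBddSet B H →
      ∀ S : Set (Set X), S ⊆ hyperBall B H β →
        (∀ T ∈ S, hyperBall B T α ∩ S = {T}) →
        S.Finite ∧ S.ncard ≤ f β) :
    ∃ Y : Set X,
      (∃ β : P, ∀ x : X, x ∈ setBall B Y β) ∧
      (∀ γ : P, ∃ F : Finset X, (F : Set X) ⊆ Y ∧
        (∀ y ∈ Y, y ∉ F → B y γ ∩ Y = {y}) ∧ (∀ y ∈ F, B y γ ∩ Y ⊆ (F : Set X))) ∧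
      (∀ F : Finset X, (F : Set X) ⊆ Y → ∃ γ : P, ∀ y ∈ F, (F : Set X) ⊆ B y γ) := by
  classical
  obtain ⟨α, f, hbg⟩ := hbg
  -- an upper bound for two radii
  have hub : ∀ a b : P, ∃ c : P, ∀ x : X, B x a ⊆ B x c ∧ B x b ⊆ B x c := by
    intro a b
    obtain ⟨c, hc⟩ := hcomp a b
    exact ⟨c, fun x => ⟨fun z hz => hc x z hz (hmem z b), fun z hz => hc x x (hmem x a) hz⟩⟩
  -- every finite set is reached from any point within one radius
  have haux : ∀ (x : X) (G : Finset X), ∃ δ : P, ∀ y ∈ G, y ∈ B x δ := by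
    intro x G
    induction G using Finset.induction_on with
    | empty => exact ⟨Classical.arbitrary P, by simp⟩
    | @insert a s ha ih =>
      obtain ⟨δ₀, h₀⟩ := ih
      obtain ⟨δ₁, h₁⟩ := hconn x a
      obtain ⟨c, hc⟩ := hub δ₀ δ₁
      refine ⟨c, fun y hy => ?_⟩
      rcases Finset.mem_insert.1 hy with rfl | hy
      · exact (hc x).2 h₁
      · exact (hc x).1 (h₀ y hy)
  -- mutual boundedness of finite sets
  have hfin : ∀ G : Finset X, ∃ δ : P, ∀ y ∈ G, ∀ z ∈ G, z ∈ B y δ := by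
    intro G
    induction G using Finset.induction_on with
    | empty => exact ⟨Classical.arbitrary P, by simp⟩
    | @insert a s ha ih =>
      obtain ⟨δ₀, h₀⟩ := ih
      obtain ⟨δ₁, h₁⟩ := haux a s
      obtain ⟨c, hc⟩ := hub δ₀ δ₁
      refine ⟨c, fun y hy z hz => ?_⟩
      rcases Finset.mem_insert.1 hy with h | hy2
      · subst h
        rcases Finset.mem_insert.1 hz with h' | hz2
        · subst h'; exact hmem _ c
        · exact (hc _).2 (h₁ z hz2)
      · rcases Finset.mem_insert.1 hz with h' | hz2
        · subst h'
          exact (hc y).2 ((hsymm _ y δ₁).1 (h₁ y hy2))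
        · exact (hc y).1 (h₀ y hy2 z hz2)
  -- nonempty finite sets are bounded
  have hbddfin : ∀ G : Finset X, (G : Set X).Nonempty → IsBddSet B (G : Set X) := by
    rintro G ⟨x, hx⟩
    obtain ⟨δ, hδ⟩ := hfin G
    exact ⟨x, δ, fun z hz => hδ x hx z hz⟩
  -- a maximal α-discrete subset Y of X
  obtain ⟨Y, hYmax⟩ := zorn_subset {Y : Set X | ∀ y ∈ Y, ∀ y' ∈ Y, y' ∈ B y α → y' = y}
    (by
      intro c hcS hchain
      refine ⟨⋃₀ c, ?_, fun s hs => Set.subset_sUnion_of_mem hs⟩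
      rintro y ⟨s, hs, hys⟩ y' ⟨s', hs', hy's'⟩ hball
      rcases hchain.total hs hs' with h | h
      · exact hcS hs' y (h hys) y' hy's' hball
      · exact hcS hs y hys y' (h hy's') hball)
  have hYdisc : ∀ y ∈ Y, ∀ y' ∈ Y, y' ∈ B y α → y' = y := hYmax.1
  -- Y is large
  have hYlarge : ∀ x : X, x ∈ setBall B Y α := by
    intro x
    by_contra hx
    have hx' : ∀ y ∈ Y, x ∉ B y α := by
      intro y hy hxy
      exact hx (Set.mem_biUnion hy hxy)
    have hins : insert x Y ∈ {Y : Set X | ∀ y ∈ Y, ∀ y' ∈ Y, y' ∈ B y α → y' = y} := by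
      rintro y (rfl | hy) y' (rfl | hy') hball
      · rfl
      · exact absurd ((hsymm _ y' α).1 hball) (hx' y' hy')
      · exact absurd hball (hx' y hy)
      · exact hYdisc y hy y' hy' hball
    have : insert x Y ⊆ Y := hYmax.2 hins (Set.subset_insert x Y)
    exact hx (Set.mem_biUnion (this (Set.mem_insert x Y)) (hmem x α))
  -- all points of Y; traces of balls on Y are finite
  have htrace : ∀ (γ : P) (p : X), (B p γ ∩ Y).Finite := by
    intro γ p
    set S : Set (Set X) := (fun z => ({z} : Set X)) '' (B p γ ∩ Y) with hS
    have hsub : S ⊆ hyperBall B ({p} : Set X) γ := by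
      rintro _ ⟨z, ⟨hz1, hz2⟩, rfl⟩
      refine ⟨⟨z, rfl⟩, ⟨z, α, by simp [hmem]⟩, ?_, ?_⟩
      · intro w hw
        rcases hw with rfl
        exact Set.mem_biUnion rfl hz1
      · intro w hw
        rcases hw with rfl
        exact Set.mem_biUnion rfl ((hsymm z w γ).2 hz1)
    have hdisc : ∀ T ∈ S, hyperBall B T α ∩ S = {T} := by
      rintro _ ⟨z, ⟨hz1, hz2⟩, rfl⟩
      ext W
      constructor
      · rintro ⟨hWh, z', ⟨hz'1, hz'2⟩, rfl⟩
        have : z' ∈ setBall B ({z} : Set X) α := hWh.2.2.1 rfl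
        obtain ⟨u, hu, hz'u⟩ := Set.mem_iUnion₂.1 this
        rcases hu with rfl
        have : z' = u := hYdisc u hz2 z' hz'2 hz'u
        simp [this]
      · rintro rfl
        exact ⟨⟨⟨z, rfl⟩, ⟨z, α, by simp [hmem]⟩,
          fun w hw => by rcases hw with rfl; exact Set.mem_biUnion rfl (hmem w α),
          fun w hw => by rcases hw with rfl; exact Set.mem_biUnion rfl (hmem w α)⟩,
          ⟨z, ⟨hz1, hz2⟩, rfl⟩⟩
    have hfinS := (hbg γ ({p} : Set X) ⟨p, rfl⟩ ⟨p, α, by simp [hmem]⟩ S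
      (by exact hsub) hdisc).1
    exact Set.Finite.of_finite_image hfinS (Set.singleton_injective.injOn)
  refine ⟨Y, ⟨α, hYlarge⟩, ?_, ?_⟩
  · -- condition (2)
    intro γ
    set D : Set X := {y ∈ Y | ∃ z ∈ Y, z ∈ B y γ ∧ z ≠ y} with hD
    have hDfin : D.Finite := by
      by_contra hinf
      have hinf : D.Infinite := hinf
      -- build n pairwise disjoint γ-close pairs inside Y
      have hpairs : ∀ n : ℕ, ∃ F : Finset (X × X), F.card = n ∧
          (∀ p ∈ F, p.1 ∈ Y ∧ p.2 ∈ Y ∧ p.2 ∈ B p.1 γ ∧ p.2 ≠ p.1) ∧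
          (∀ p ∈ F, ∀ q ∈ F, p ≠ q →
            p.1 ≠ q.1 ∧ p.1 ≠ q.2 ∧ p.2 ≠ q.1 ∧ p.2 ≠ q.2) := by
        intro n
        induction n with
        | zero => exact ⟨∅, by simp⟩
        | succ n ih =>
          obtain ⟨F, hcard, hmemF, hdist⟩ := ih
          set E : Finset X := F.image Prod.fst ∪ F.image Prod.snd with hE
          have hU : (⋃ p ∈ (E : Set X), B p γ ∩ Y).Finite :=
            Set.Finite.biUnion E.finite_toSet (fun p _ => htrace γ p)
          obtain ⟨y, hyD, hyU⟩ := (hinf.diff hU).nonempty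
          obtain ⟨hyY, z, hzY, hzB, hzne⟩ := hyD
          have hnotE : ∀ w ∈ E, y ∉ B w γ := by
            intro w hw hyw
            exact hyU (Set.mem_biUnion hw ⟨hyw, hyY⟩)
          have hyE : ∀ w ∈ E, y ≠ w := by
            intro w hw h; exact hnotE w hw (h ▸ hmem y γ)
          have hzE : ∀ w ∈ E, z ≠ w := by
            intro w hw h
            exact hnotE w hw (h ▸ (hsymm y z γ).1 hzB)
          have hmemE1 : ∀ q ∈ F, q.1 ∈ E := fun q hq =>
            Finset.mem_union_left _ (Finset.mem_image_of_mem Prod.fst hq)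
          have hmemE2 : ∀ q ∈ F, q.2 ∈ E := fun q hq =>
            Finset.mem_union_right _ (Finset.mem_image_of_mem Prod.snd hq)
          have hnew : (y, z) ∉ F := by
            intro h; exact hyE y (hmemE1 (y, z) h) rfl
          refine ⟨insert (y, z) F, by rw [Finset.card_insert_of_notMem hnew, hcard], ?_, ?_⟩
          · intro p hp
            rcases Finset.mem_insert.1 hp with rfl | hp
            · exact ⟨hyY, hzY, hzB, hzne⟩
            · exact hmemF p hp
          · intro p hp q hq hpq
            rcases Finset.mem_insert.1 hp with rfl | hp <;>
              rcases Finset.mem_insert.1 hq with rfl | hq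
            · exact absurd rfl hpq
            · exact ⟨hyE q.1 (hmemE1 q hq), hyE q.2 (hmemE2 q hq),
                hzE q.1 (hmemE1 q hq), hzE q.2 (hmemE2 q hq)⟩
            · exact ⟨fun h => hyE p.1 (hmemE1 p hp) h.symm,
                fun h => hzE p.1 (hmemE1 p hp) h.symm,
                fun h => hyE p.2 (hmemE2 p hp) h.symm,
                fun h => hzE p.2 (hmemE2 p hp) h.symm⟩
            · exact hdist p hp q hq hpq
      obtain ⟨F, hcard, hmemF, hdist⟩ := hpairs (f γ + 1)
      have hFne : F.Nonempty := Finset.card_pos.1 (by omega)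
      -- the sets Z_T for T ⊆ F
      set g : Finset (X × X) → Set X :=
        fun T => (((F \ T).image Prod.fst ∪ T.image Prod.snd : Finset X) : Set X) with hg
      -- points of g T lie in Y
      have hgY : ∀ T : Finset (X × X), T ⊆ F → ∀ w ∈ g T, w ∈ Y := by
        intro T hT w hw
        simp only [hg, Finset.coe_union, Set.mem_union, Finset.coe_image,
          Set.mem_image, Finset.mem_coe] at hw
        rcases hw with ⟨q, hq, rfl⟩ | ⟨q, hq, rfl⟩
        · exact (hmemF q (Finset.mem_sdiff.1 hq).1).1
        · exact (hmemF q (hT hq)).2.1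
      -- key separation lemma
      have hkey : ∀ T : Finset (X × X), T ⊆ F → ∀ p ∈ F, p ∉ T →
          p.2 ∉ setBall B (g T) α := by
        intro T hT p hpF hpT hball
        obtain ⟨u, hu, hpu⟩ := Set.mem_iUnion₂.1 hball
        have huY : u ∈ Y := hgY T hT u hu
        have hp2Y : p.2 ∈ Y := (hmemF p hpF).2.1
        have heq : p.2 = u := hYdisc u huY p.2 hp2Y hpu
        subst heq
        simp only [hg, Finset.coe_union, Set.mem_union, Finset.coe_image,
          Set.mem_image, Finset.mem_coe] at hu
        rcases hu with ⟨q, hq, hq2⟩ | ⟨q, hq, hq2⟩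
        · rcases Finset.mem_sdiff.1 hq with ⟨hqF, _⟩
          by_cases hpq : p = q
          · subst hpq; exact (hmemF p hpF).2.2.2 hq2.symm
          · exact (hdist p hpF q hqF hpq).2.2.1 hq2.symm
        · have hqF : q ∈ F := hT hq
          have hpq : p ≠ q := fun h => hpT (h ▸ hq)
          exact (hdist p hpF q hqF hpq).2.2.2 hq2.symm
      -- each g T is in its own hyperball
      have hgball : ∀ T : Finset (X × X), T ⊆ F → ∀ δ : P, g T ⊆ setBall B (g T) δ :=
        fun T _ δ w hw => Set.mem_biUnion hw (hmem w δ)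
      have hgne : ∀ T : Finset (X × X), T ⊆ F → (g T).Nonempty := by
        intro T hT
        obtain ⟨p, hp⟩ := hFne
        by_cases hpT : p ∈ T
        · exact ⟨p.2, by
            simp only [hg, Finset.coe_union, Set.mem_union, Finset.coe_image,
              Set.mem_image, Finset.mem_coe]
            exact Or.inr ⟨p, hpT, rfl⟩⟩
        · exact ⟨p.1, by
            simp only [hg, Finset.coe_union, Set.mem_union, Finset.coe_image,
              Set.mem_image, Finset.mem_coe]
            exact Or.inl ⟨p, Finset.mem_sdiff.2 ⟨hp, hpT⟩, rfl⟩⟩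
      set S : Set (Set X) := g '' (F.powerset : Set (Finset (X × X))) with hSdef
      set H : Set X := ((F.image Prod.fst : Finset X) : Set X) with hH
      have hHne : H.Nonempty := by
        obtain ⟨p, hp⟩ := hFne
        refine ⟨p.1, ?_⟩
        simp only [hH, Finset.coe_image, Set.mem_image, Finset.mem_coe]
        exact ⟨p, hp, rfl⟩
      have hHbdd : IsBddSet B H := hbddfin _ hHne
      have hsubS : S ⊆ hyperBall B H γ := by
        rintro _ ⟨T, hT, rfl⟩
        have hTF : T ⊆ F := Finset.mem_powerset.1 (by exact hT)
        refine ⟨hgne T hTF, hbddfin _ (hgne T hTF), ?_, ?_⟩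
        · intro w hw
          simp only [hg, Finset.coe_union, Set.mem_union, Finset.coe_image,
            Set.mem_image, Finset.mem_coe] at hw
          rcases hw with ⟨q, hq, rfl⟩ | ⟨q, hq, rfl⟩
          · refine Set.mem_biUnion ?_ (hmem q.1 γ)
            simp only [hH, Finset.coe_image, Set.mem_image, Finset.mem_coe]
            exact ⟨q, (Finset.mem_sdiff.1 hq).1, rfl⟩
          · refine Set.mem_biUnion ?_ ((hmemF q (hTF hq)).2.2.1)
            simp only [hH, Finset.coe_image, Set.mem_image, Finset.mem_coe]
            exact ⟨q, hTF hq, rfl⟩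
        · intro w hw
          simp only [hH, Finset.coe_image, Set.mem_image, Finset.mem_coe] at hw
          obtain ⟨q, hq, rfl⟩ := hw
          by_cases hqT : q ∈ T
          · refine Set.mem_biUnion (show q.2 ∈ g T from ?_)
              ((hsymm q.2 q.1 γ).2 ((hmemF q hq).2.2.1))
            simp only [hg, Finset.coe_union, Set.mem_union, Finset.coe_image,
              Set.mem_image, Finset.mem_coe]
            exact Or.inr ⟨q, hqT, rfl⟩
          · refine Set.mem_biUnion (show q.1 ∈ g T from ?_) (hmem q.1 γ)
            simp only [hg, Finset.coe_union, Set.mem_union, Finset.coe_image,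
              Set.mem_image, Finset.mem_coe]
            exact Or.inl ⟨q, Finset.mem_sdiff.2 ⟨hq, hqT⟩, rfl⟩
      -- equality of g-sets forces equality of index sets
      have hTeq : ∀ T ∈ F.powerset, ∀ T' ∈ F.powerset,
          g T ⊆ setBall B (g T') α → g T' ⊆ setBall B (g T) α → T = T' := by
        intro T hT T' hT' h1 h2
        have hTF : T ⊆ F := Finset.mem_powerset.1 hT
        have hT'F : T' ⊆ F := Finset.mem_powerset.1 hT'
        apply Finset.Subset.antisymm
        · intro p hp
          by_contra hp'
          refine hkey T' hT'F p (hTF hp) hp' (h1 ?_)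
          simp only [hg, Finset.coe_union, Set.mem_union, Finset.coe_image,
            Set.mem_image, Finset.mem_coe]
          exact Or.inr ⟨p, hp, rfl⟩
        · intro p hp
          by_contra hp'
          refine hkey T hTF p (hT'F hp) hp' (h2 ?_)
          simp only [hg, Finset.coe_union, Set.mem_union, Finset.coe_image,
            Set.mem_image, Finset.mem_coe]
          exact Or.inr ⟨p, hp, rfl⟩
      have hdiscS : ∀ Z ∈ S, hyperBall B Z α ∩ S = {Z} := by
        rintro _ ⟨T, hT, rfl⟩
        have hTF : T ⊆ F := Finset.mem_powerset.1 (by exact hT)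
        ext W
        constructor
        · rintro ⟨hWh, T', hT', rfl⟩
          have hT'F : T' ⊆ F := Finset.mem_powerset.1 (by exact hT')
          have : T = T' := hTeq T (by exact hT) T' (by exact hT')
            hWh.2.2.2 hWh.2.2.1
          simp [this]
        · rintro rfl
          exact ⟨⟨hgne T hTF, hbddfin _ (hgne T hTF), hgball T hTF α, hgball T hTF α⟩,
            ⟨T, hT, rfl⟩⟩
      have hcardS := (hbg γ H hHne hHbdd S hsubS hdiscS).2
      have hinj : Set.InjOn g (F.powerset : Set (Finset (X × X))) := by
        intro T hT T' hT' heq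
        exact hTeq T hT T' hT'
          (heq ▸ hgball T' (Finset.mem_powerset.1 hT') α)
          (heq ▸ hgball T (Finset.mem_powerset.1 hT) α)
      have hncard : S.ncard = 2 ^ (f γ + 1) := by
        rw [hSdef, Set.ncard_image_of_injOn hinj, Set.ncard_coe_finset,
          Finset.card_powerset, hcard]
      rw [hncard] at hcardS
      have h1 : f γ + 1 < 2 ^ (f γ + 1) := Nat.lt_two_pow_self
      omega
    refine ⟨hDfin.toFinset, ?_, ?_, ?_⟩
    · rw [Set.Finite.coe_toFinset]
      exact fun y hy => hy.1
    · intro y hyY hyF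
      rw [Set.Finite.mem_toFinset] at hyF
      ext z
      constructor
      · rintro ⟨hz1, hz2⟩
        by_contra hzy
        exact hyF ⟨hyY, z, hz2, hz1, hzy⟩
      · rintro rfl
        exact ⟨hmem z γ, hyY⟩
    · intro y hyF z hz
      rw [Set.Finite.mem_toFinset] at hyF
      rw [Set.Finite.coe_toFinset]
      obtain ⟨hz1, hz2⟩ := hz
      by_cases hzy : z = y
      · exact hzy ▸ hyF
      · exact ⟨hz2, y, hyF.1, (hsymm z y γ).2 hz1, fun h => hzy h.symm⟩
  · -- condition (3)
    intro F _
    obtain ⟨γ, hγ⟩ := hfin F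
    exact ⟨γ, fun y hy z hz => hγ y hy z hz⟩
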